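/- arXiv:2304.06715 — 2 statements merged into one kernel-verified Lean document; each statement's English description precedes it below -/
import Mathlib

section
/- Let f : ℝᵈ → ℝ be differentiable and G-invariant under a permutation representation ρ, and let x̄ ∈ ℝᵈ satisfy ρ[g] x̄ = x̄ for all g ∈ G. Define the Input-times-Gradient explanation e(x) = (x − x̄) ⊙ ∇f(x). Then e is G-equivariant: e(ρ[g] x) = ρ[g] e(x). -/
open InnerProductSpace

lemma grad_comp_isom {d : ℕ} (L : EuclideanSpace ℝ (Fin d) ≃ₗᵢ[ℝ] EuclideanSpace ℝ (Fin d))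
    (f : EuclideanSpace ℝ (Fin d) → ℝ) (hdiff : Differentiable ℝ f)
    (hinv : ∀ y, f (L y) = f y) (x : EuclideanSpace ℝ (Fin d)) :
    gradient f (L x) = L (gradient f x) := by
  apply ext_inner_right ℝ
  intro v
  have h1 : ⟪gradient f (L x), v⟫_ℝ = fderiv ℝ f (L x) v := by
    rw [gradient, InnerProductSpace.toDual_symm_apply]
  have h2 : ⟪L (gradient f x), v⟫_ℝ = fderiv ℝ f x (L.symm v) := by
    conv_lhs => rw [← L.apply_symm_apply v]
    rw [L.inner_map_map, gradient, InnerProductSpace.toDual_symm_apply]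
  rw [h1, h2]
  have hfL : f ∘ L = f := funext hinv
  have := fderiv_comp x (hdiff (L x)) (L.toContinuousLinearEquiv.differentiableAt)
  rw [hfL, L.fderiv] at this
  have := congrArg (fun (T : EuclideanSpace ℝ (Fin d) →L[ℝ] ℝ) => T (L.symm v)) this
  simp at this
  rw [this]

/-- Input-times-Gradient `e(x) = (x − x̄) ⊙ ∇f(x)` is `G`-equivariant when `f`
is `G`-invariant under a permutation representation `ρ` and the baseline `x̄`
is `G`-invariant. -/
theorem input_times_gradient_equivariant {d : ℕ} {G : Type*} [Group G]
    (ρ : G → Matrix (Fin d) (Fin d) ℝ)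
    (hrep : ∀ g₁ g₂ : G, ρ (g₁ * g₂) = ρ g₁ * ρ g₂)
    (hperm : ∀ g : G, ∃ π : Equiv.Perm (Fin d),
      ∀ (v : Fin d → ℝ) (i : Fin d), (ρ g).mulVec v i = v (π i))
    (f : EuclideanSpace ℝ (Fin d) → ℝ)
    (hdiff : Differentiable ℝ f)
    (hinv : ∀ (g : G) (x : EuclideanSpace ℝ (Fin d)), f (WithLp.toLp 2 ((ρ g).mulVec x)) = f x)
    (xbar : EuclideanSpace ℝ (Fin d))
    (hbar : ∀ g : G, (ρ g).mulVec xbar = xbar)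
    (e : EuclideanSpace ℝ (Fin d) → EuclideanSpace ℝ (Fin d))
    (he : ∀ (x : EuclideanSpace ℝ (Fin d)) (i : Fin d),
      e x i = (x i - xbar i) * gradient f x i)
    (g : G) (x : EuclideanSpace ℝ (Fin d)) :
    e (WithLp.toLp 2 ((ρ g).mulVec x)) = (ρ g).mulVec (e x) := by
  obtain ⟨π, hπ⟩ := hperm g
  set L : EuclideanSpace ℝ (Fin d) ≃ₗᵢ[ℝ] EuclideanSpace ℝ (Fin d) :=
    LinearIsometryEquiv.piLpCongrLeft 2 ℝ ℝ (π.symm : Fin d ≃ Fin d) with hL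
  have hLv : ∀ v : EuclideanSpace ℝ (Fin d), (ρ g).mulVec v = L v := by
    intro v
    funext i
    rw [hπ v i]
    simp [hL, LinearIsometryEquiv.piLpCongrLeft_apply, Equiv.piCongrLeft'_apply]
  have hgrad : gradient f (L x) = L (gradient f x) :=
    grad_comp_isom L f hdiff (fun y => by rw [← hinv g y, hLv y]) x
  have hLapp : ∀ (v : EuclideanSpace ℝ (Fin d)) (i : Fin d), L v i = v (π i) := by
    intro v i
    simp [hL, LinearIsometryEquiv.piLpCongrLeft_apply, Equiv.piCongrLeft'_apply]
  funext i
  rw [hLv (e x), hLv x, WithLp.toLp_ofLp]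
  rw [show e (L x) i = (e (L x)) i from rfl, he (L x) i, hgrad, hLapp, hLapp, hLapp,
    he x (π i)]
  have hbari : xbar (π i) = xbar i := by
    conv_rhs => rw [← hbar g]
    rw [hπ]
  rw [hbari]
end

section
/- Let f : ℝᵈ → ℝ be differentiable and G-invariant under a permutation representation ρ, and let x̄ ∈ ℝᵈ be G-invariant (ρ[g] x̄ = x̄ for all g). For a weight function φ ∈ L²([0,1]), define e(x) = (x − x̄) ⊙ ∫₀¹ φ(t) ∇f(x̄ + t(x − x̄)) dt. Then e(ρ[g] x) = ρ[g] e(x) for all g ∈ G and x ∈ ℝᵈ. -/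
/-- Gradient-based explanations of the form
`e(x) = (x − x̄) ⊙ ∫₀¹ φ(t) ∇f(x̄ + t(x − x̄)) dt` (generalized Integrated
Gradients) are `G`-equivariant when `f` is `G`-invariant under a permutation
representation `ρ` and the baseline `x̄` is `G`-invariant. -/
theorem integrated_gradients_equivariant {d : ℕ} {G : Type*} [Group G]
    (ρ : G → Matrix (Fin d) (Fin d) ℝ)
    (hrep : ∀ g₁ g₂ : G, ρ (g₁ * g₂) = ρ g₁ * ρ g₂)
    (hperm : ∀ g : G, ∃ π : Equiv.Perm (Fin d),
      ∀ (v : Fin d → ℝ) (i : Fin d), (ρ g).mulVec v i = v (π i))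
    (f : EuclideanSpace ℝ (Fin d) → ℝ)
    (hdiff : Differentiable ℝ f)
    (hinv : ∀ (g : G) (x : EuclideanSpace ℝ (Fin d)), f (WithLp.toLp 2 ((ρ g).mulVec x)) = f x)
    (xbar : EuclideanSpace ℝ (Fin d))
    (hbar : ∀ g : G, (ρ g).mulVec xbar = xbar)
    (φ : ℝ → ℝ)
    (hφ : MeasureTheory.MemLp φ 2 (MeasureTheory.volume.restrict (Set.Icc (0:ℝ) 1)))
    (e : EuclideanSpace ℝ (Fin d) → EuclideanSpace ℝ (Fin d))
    (he : ∀ (x : EuclideanSpace ℝ (Fin d)) (i : Fin d),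
      e x i = (x i - xbar i) *
        (∫ t in (0:ℝ)..1, φ t • gradient f (xbar + t • (x - xbar))) i)
    (g : G) (x : EuclideanSpace ℝ (Fin d)) :
    e (WithLp.toLp 2 ((ρ g).mulVec x)) = WithLp.toLp 2 ((ρ g).mulVec (e x)) := by
  classical
  obtain ⟨π, hπ⟩ := hperm g
  -- the permutation as a linear isometry equiv of Euclidean space
  set P : EuclideanSpace ℝ (Fin d) ≃ₗᵢ[ℝ] EuclideanSpace ℝ (Fin d) :=
    LinearIsometryEquiv.piLpCongrLeft 2 ℝ ℝ (π.symm : Fin d ≃ Fin d) with hPdef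
  have hP : ∀ (v : EuclideanSpace ℝ (Fin d)) (i : Fin d), P v i = v (π i) := by
    intro v i
    simp [hPdef, LinearIsometryEquiv.piLpCongrLeft_apply, Equiv.piCongrLeft']
  have hmul : ∀ v : EuclideanSpace ℝ (Fin d), (ρ g).mulVec v = P v := by
    intro v; funext i; rw [hπ v i, hP]
  -- P fixes the baseline
  have hPxbar : P xbar = xbar := by ext i; rw [← hmul, hbar g]
  -- f is invariant under P
  have hfP : ∀ y, f (P y) = f y := by intro y; rw [show P y = WithLp.toLp 2 ((ρ g).mulVec y) by simp [hmul]]; exact hinv g y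
  -- gradient equivariance: gradient f (P y) = P (gradient f y)
  have hgrad : ∀ y : EuclideanSpace ℝ (Fin d),
      gradient f (P y) = P (gradient f y) := by
    intro y
    have hfd : HasFDerivAt f
        ((fderiv ℝ f (P y)).comp (P.toContinuousLinearEquiv :
          EuclideanSpace ℝ (Fin d) →L[ℝ] EuclideanSpace ℝ (Fin d))) y := by
      have h1 : HasFDerivAt (f ∘ P) _ y :=
        (hdiff (P y)).hasFDerivAt.comp y
          (P.toContinuousLinearEquiv.toContinuousLinearMap.hasFDerivAt)
      have : (f ∘ P) = f := funext fun z => hfP z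
      rwa [this] at h1
    have huniq : fderiv ℝ f y = (fderiv ℝ f (P y)).comp
        (P.toContinuousLinearEquiv :
          EuclideanSpace ℝ (Fin d) →L[ℝ] EuclideanSpace ℝ (Fin d)) := hfd.fderiv
    apply ext_inner_right ℝ
    intro v
    have h2 : (inner ℝ (gradient f (P y)) v : ℝ) = fderiv ℝ f (P y) v := by
      rw [gradient, InnerProductSpace.toDual_symm_apply]
    have h3 : (inner ℝ (P (gradient f y)) v : ℝ) = fderiv ℝ f (P y) v := by
      conv_lhs => rw [← P.apply_symm_apply v, P.inner_map_map]
      have h4 : (inner ℝ (gradient f y) (P.symm v) : ℝ) = fderiv ℝ f y (P.symm v) := by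
        rw [gradient, InnerProductSpace.toDual_symm_apply]
      rw [h4, huniq]
      simp
    rw [h2, h3]
  -- P commutes with the interval integral
  have hint : ∀ F : ℝ → EuclideanSpace ℝ (Fin d),
      (∫ t in (0:ℝ)..1, P (F t)) = P (∫ t in (0:ℝ)..1, F t) := by
    intro F
    have key : ∀ s : Set ℝ,
        (∫ t in s, P (F t)) = P (∫ t in s, F t) := by
      intro s
      have h := P.toLinearIsometry.integral_comp_comm
        (μ := MeasureTheory.volume.restrict s) F
      simpa [LinearIsometryEquiv.coe_toLinearIsometry] using h
    simp only [intervalIntegral]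
    rw [key, key, map_sub]
  -- conclude componentwise
  ext i
  rw [hmul x]
  simp only [WithLp.toLp_ofLp, WithLp.ofLp_toLp]
  rw [hπ (e x) i, he (P x) i, he x (π i)]
  have hIx : (∫ t in (0:ℝ)..1, φ t • gradient f (xbar + t • (P x - xbar)))
      = P (∫ t in (0:ℝ)..1, φ t • gradient f (xbar + t • (x - xbar))) := by
    rw [← hint]
    congr 1
    funext t
    rw [show xbar + t • (P x - xbar) = P (xbar + t • (x - xbar)) by
      rw [map_add, map_smul, map_sub, hPxbar], hgrad, map_smul]
  have hxb : xbar (π i) = xbar i := by rw [← hP xbar i, hPxbar]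
  rw [hIx, hP, hP, hxb]
end
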